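/- Let f : ℤ → α be a function, n ≥ 1, and let l, u : Fin n → ℤ and e : Fin n → α be such that: (1) for every i and every x with l i ≤ x ≤ u i, f x = e i; (2) each interval is nonempty, i.e. l i ≤ u i; (3) consecutive intervals overlap, i.e. for every i with i+1 < n, l ⟨i+1⟩ ≤ u ⟨i⟩. Then f is constant with value e 0 on the whole interval [l 0, u ⟨n-1⟩]: for every x with l 0 ≤ x ≤ u ⟨n-1⟩, f x = e 0. -/

import Mathlib

theorem stmt5_aux {α : Type*} (f : ℤ → α) : ∀ (n : ℕ) (hn : 0 < n)
    (l u : Fin n → ℤ) (e : Fin n → α)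
    (_ : ∀ (i : Fin n) (x : ℤ), l i ≤ x → x ≤ u i → f x = e i)
    (_ : ∀ i : Fin n, l i ≤ u i)
    (_ : ∀ (i : Fin n) (h : i.val + 1 < n), l ⟨i.val + 1, h⟩ ≤ u i)
    (x : ℤ), l ⟨0, hn⟩ ≤ x → x ≤ u ⟨n - 1, Nat.sub_lt hn Nat.one_pos⟩ → f x = e ⟨0, hn⟩ := by
  intro n
  induction n with
  | zero => intro hn; omega
  | succ m ih =>
    intro hn l u e hconst hne hover x hx1 hx2
    rcases Nat.eq_zero_or_pos m with hm | hm
    · subst hm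
      exact hconst ⟨0, hn⟩ x hx1 hx2
    · have hx2' : x ≤ u ⟨m, by omega⟩ := hx2
      have IH : ∀ z : ℤ, l ⟨0, hn⟩ ≤ z → z ≤ u ⟨m - 1, by omega⟩ →
          f z = e ⟨0, hn⟩ := by
        intro z hz1 hz2
        have := ih hm (fun i => l ⟨i, by omega⟩) (fun i => u ⟨i, by omega⟩)
          (fun i => e ⟨i, by omega⟩)
          (fun i z h1 h2 => hconst ⟨i, by omega⟩ z h1 h2)
          (fun i => hne ⟨i, by omega⟩)
          (fun i h => hover ⟨i.val, by omega⟩ (by simp only [Fin.val_mk]; omega))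
          z hz1 hz2
        exact this
      by_cases hxc : x ≤ u ⟨m - 1, by omega⟩
      · exact IH x hx1 hxc
      · push_neg at hxc
        -- overlap: l ⟨m⟩ ≤ u ⟨m-1⟩
        have hov : l ⟨m, by omega⟩ ≤ u ⟨m - 1, by omega⟩ := by
          have h := hover ⟨m - 1, by omega⟩ (by simp only [Fin.val_mk]; omega)
          simp only [Fin.val_mk, show m - 1 + 1 = m from by omega] at h
          exact h
        have hfx : f x = e ⟨m, by omega⟩ :=
          hconst ⟨m, by omega⟩ x (le_trans hov (le_of_lt hxc)) hx2'
        by_cases hl0 : l ⟨0, hn⟩ ≤ u ⟨m - 1, by omega⟩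
        · have h1 : f (max (l ⟨0, hn⟩) (l ⟨m, by omega⟩)) = e ⟨0, hn⟩ :=
            IH _ (le_max_left _ _) (max_le hl0 hov)
          have h2 : f (max (l ⟨0, hn⟩) (l ⟨m, by omega⟩)) = e ⟨m, by omega⟩ :=
            hconst ⟨m, by omega⟩ _ (le_max_right _ _)
              (max_le (le_trans hx1 hx2') (hne ⟨m, by omega⟩))
          exact hfx.trans (h2.symm.trans h1)
        · push_neg at hl0
          -- l 0 itself lies in interval m
          have h1 : f (l ⟨0, hn⟩) = e ⟨0, hn⟩ :=
            hconst ⟨0, hn⟩ _ le_rfl (hne _)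
          have h2 : f (l ⟨0, hn⟩) = e ⟨m, by omega⟩ :=
            hconst ⟨m, by omega⟩ _ (le_trans hov (le_of_lt hl0))
              (le_trans hx1 hx2')
          exact hfx.trans (h2.symm.trans h1)

theorem stmt5 {α : Type*} (f : ℤ → α) (n : ℕ) (hn : 0 < n)
    (l u : Fin n → ℤ) (e : Fin n → α)
    (hconst : ∀ (i : Fin n) (x : ℤ), l i ≤ x → x ≤ u i → f x = e i)
    (hne : ∀ i : Fin n, l i ≤ u i)
    (hover : ∀ (i : Fin n) (h : i.val + 1 < n), l ⟨i.val + 1, h⟩ ≤ u i) :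
    ∀ x : ℤ, l ⟨0, hn⟩ ≤ x → x ≤ u ⟨n - 1, by omega⟩ → f x = e ⟨0, hn⟩ := by
  intro x h1 h2
  exact stmt5_aux f n hn l u e hconst hne hover x h1 h2
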